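/- Let f(z) be an analytic function in the closed disk {z ∈ ℂ : |z| ≤ R} that has no zeros in this disk and satisfies |f(0)| = 1. Then for every r with 0 < r < R and every z with |z| = r, one has log|f(z)| ≥ −(2r/(R−r))·log M_f(R), where M_f(R) = max_{|z|=R} |f(z)|. -/

import Mathlib

open MeasureTheory Metric

/-- Existence of an analytic logarithm with prescribed real part on a closed disk,
for a zero-free analytic function. -/
lemma exists_log_aux {f : ℂ → ℂ} {s : ℝ} (hs : 0 < s)
    (hf : AnalyticOnNhd ℂ f (closedBall (0 : ℂ) s))
    (hnz : ∀ z ∈ closedBall (0 : ℂ) s, f z ≠ 0) (h1 : ‖f 0‖ = 1) :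
    ∃ H : ℂ → ℂ, DifferentiableOn ℂ H (closedBall (0 : ℂ) s) ∧ H 0 = 0 ∧
      ∀ z ∈ closedBall (0 : ℂ) s, (H z).re = Real.log ‖f z‖ := by
  classical
  -- enlarge the disk a bit
  set V : Set ℂ := {x | AnalyticAt ℂ f x ∧ f x ≠ 0} with hV
  have hVopen : IsOpen V := by
    rw [isOpen_iff_mem_nhds]
    rintro x ⟨hx1, hx2⟩
    filter_upwards [hx1.eventually_analyticAt, hx1.continuousAt.eventually_ne hx2] with y h1 h2
    exact ⟨h1, h2⟩
  have hKV : closedBall (0 : ℂ) s ⊆ V := fun x hx => ⟨hf x hx, hnz x hx⟩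
  obtain ⟨δ, hδ, hsub⟩ :=
    (isCompact_closedBall (0 : ℂ) s).exists_cthickening_subset_open hVopen hKV
  have hsub' : closedBall (0 : ℂ) (s + δ) ⊆ V := by
    rw [add_comm, ← cthickening_closedBall hδ.le hs.le (0 : ℂ)]; exact hsub
  -- the logarithmic derivative and its power series
  set h : ℂ → ℂ := fun w => deriv f w / f w with hh
  have hfa : AnalyticOnNhd ℂ f V := fun y hy => hy.1
  have hda : AnalyticOnNhd ℂ (deriv f) V := hfa.deriv
  have hha : AnalyticOnNhd ℂ h V := fun y hy => ((hda y hy).div (hfa y hy) hy.2)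
  have hσpos : (0 : ℝ) < s + δ / 2 := by linarith
  set σ : NNReal := (s + δ / 2).toNNReal with hσ
  have hσcoe : (σ : ℝ) = s + δ / 2 := Real.coe_toNNReal _ hσpos.le
  have hhd : DifferentiableOn ℂ h (closedBall (0 : ℂ) (σ : ℝ)) := by
    intro x hx
    have hxV : x ∈ V := hsub' (by
      rw [mem_closedBall] at hx ⊢
      rw [hσcoe] at hx; linarith)
    exact (hha x hxV).differentiableAt.differentiableWithinAt
  have hσpos' : 0 < σ := by
    rw [← NNReal.coe_pos, hσcoe]; exact hσpos
  have hp : HasFPowerSeriesOnBall h (cauchyPowerSeries h 0 σ) 0 σ :=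
    hhd.hasFPowerSeriesOnBall hσpos'
  set p := cauchyPowerSeries h 0 σ with hpdef
  -- summable bound on radius s + δ/4
  have hρpos : (0 : ℝ) < s + δ / 4 := by linarith
  set ρ : NNReal := (s + δ / 4).toNNReal with hρ
  have hρcoe : (ρ : ℝ) = s + δ / 4 := Real.coe_toNNReal _ hρpos.le
  have hρσ : ρ < σ := by rw [← NNReal.coe_lt_coe, hρcoe, hσcoe]; linarith
  have hsummable : Summable fun n => ‖p n‖ * (ρ : ℝ) ^ n :=
    p.summable_norm_mul_pow ((ENNReal.coe_lt_coe.2 hρσ).trans_le hp.r_le)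
  -- the terms of the antiderivative series
  set g : ℕ → ℂ → ℂ := fun n y => (p.coeff n / ((n : ℂ) + 1)) * y ^ (n + 1) with hg
  set g' : ℕ → ℂ → ℂ := fun n y => p.coeff n * y ^ n with hg'
  have hder : ∀ n y, HasDerivAt (g n) (g' n y) y := by
    intro n y
    have := (hasDerivAt_pow (n + 1) y).const_mul (p.coeff n / ((n : ℂ) + 1))
    refine this.congr_deriv ?_
    have hne : ((n : ℂ) + 1) ≠ 0 := Nat.cast_add_one_ne_zero n
    simp only [hg', Nat.add_sub_cancel]
    push_cast
    rw [← mul_assoc, div_mul_cancel₀ _ hne]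
  set t : Set ℂ := ball (0 : ℂ) (s + δ / 4) with ht
  have hbound : ∀ n y, y ∈ t → ‖g' n y‖ ≤ ‖p n‖ * (ρ : ℝ) ^ n := by
    intro n y hy
    rw [mem_ball, dist_zero_right] at hy
    have : ‖g' n y‖ = ‖p.coeff n‖ * ‖y‖ ^ n := by
      simp [hg', norm_mul, norm_pow]
    rw [this, p.norm_apply_eq_norm_coef]
    exact mul_le_mul_of_nonneg_left
      (pow_le_pow_left₀ (norm_nonneg y) (by rw [hρcoe]; exact hy.le) n) (norm_nonneg _)
  have h0t : (0 : ℂ) ∈ t := by simp [ht, hρpos]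
  have hg0 : Summable fun n => g n 0 := by
    apply Summable.congr summable_zero
    intro n; simp [hg]
  set G : ℂ → ℂ := fun y => ∑' n, g n y with hG
  have hsum_g' : ∀ y ∈ t, HasSum (fun n => g' n y) (h y) := by
    intro y hy
    have hmem : y ∈ Metric.eball (0 : ℂ) σ := by
      rw [mem_emetric_ball_zero_iff]
      rw [mem_ball, dist_zero_right] at hy
      have : ‖y‖₊ < σ := by
        rw [← NNReal.coe_lt_coe, coe_nnnorm, hσcoe]
        linarith
      exact_mod_cast ENNReal.coe_lt_coe.2 this
    have := hp.hasSum hmem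
    rw [zero_add] at this
    have e : (fun n => g' n y) = fun n => p n (fun _ => y) := by
      funext n
      rw [p.apply_eq_pow_smul_coeff, smul_eq_mul, hg']
      ring
    rw [e]; exact this
  have hkey : ∀ y ∈ t, HasDerivAt G (h y) y := by
    intro y hy
    have := hasDerivAt_tsum_of_isPreconnected hsummable isOpen_ball
      (convex_ball (0 : ℂ) (s + δ / 4)).isPreconnected (fun n y _ => hder n y) hbound h0t hg0 hy
    rwa [(hsum_g' y hy).tsum_eq] at this
  -- f * exp(-(G + log (f 0))) is constant 1 on t
  set c : ℂ := Complex.log (f 0) with hc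
  have hG0 : G 0 = 0 := by
    rw [hG]
    convert tsum_zero with n
    simp [hg]
  have hFconst : ∀ y ∈ t, f y * Complex.exp (-(G y + c)) = 1 := by
    have hF : ∀ y ∈ t, HasDerivAt (fun w => f w * Complex.exp (-(G w + c))) 0 y := by
      intro y hy
      have hyV : y ∈ V := by
        apply hsub'
        rw [mem_ball, dist_zero_right] at hy
        rw [mem_closedBall, dist_zero_right]
        linarith
      have hfy : HasDerivAt f (deriv f y) y := (hyV.1.differentiableAt).hasDerivAt
      have hEy : HasDerivAt (fun w => Complex.exp (-(G w + c)))
          (Complex.exp (-(G y + c)) * (-(h y))) y :=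
        (((hkey y hy).add_const c).neg).cexp
      have := hfy.mul hEy
      refine this.congr_deriv ?_
      rw [hh]
      field_simp [hyV.2]
      ring
    have hFd : DifferentiableOn ℂ (fun w => f w * Complex.exp (-(G w + c))) t :=
      fun y hy => ((hF y hy).differentiableAt).differentiableWithinAt
    intro y hy
    have := (convex_ball (0 : ℂ) (s + δ / 4)).is_const_of_fderivWithin_eq_zero hFd
      (fun x hx => by
        rw [fderivWithin_of_isOpen isOpen_ball hx, (hF x hx).hasFDerivAt.fderiv]
        ext w
        simp) hy h0t
    rw [this, hG0, zero_add, hc, Complex.exp_neg,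
      Complex.exp_log (hnz 0 (mem_closedBall_self hs.le)),
      mul_inv_cancel₀ (hnz 0 (mem_closedBall_self hs.le))]
  refine ⟨G, ?_, hG0, ?_⟩
  · intro x hx
    have hxt : x ∈ t := by
      rw [mem_closedBall, dist_zero_right] at hx
      rw [ht, mem_ball, dist_zero_right]
      linarith
    exact ((hkey x hxt).differentiableAt).differentiableWithinAt
  · intro x hx
    have hxt : x ∈ t := by
      rw [mem_closedBall, dist_zero_right] at hx
      rw [ht, mem_ball, dist_zero_right]
      linarith
    have hnorm : ‖f x‖ * Real.exp (-(G x + c)).re = 1 := by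
      have h2 := congrArg norm (hFconst x hxt)
      rwa [norm_mul, Complex.norm_exp, norm_one] at h2
    have hcre : c.re = 0 := by
      rw [hc, Complex.log_re, h1, Real.log_one]
    have hfx : ‖f x‖ = Real.exp ((G x).re) := by
      have hre : (-(G x + c)).re = -((G x).re) := by simp [hcre]
      rw [hre, Real.exp_neg] at hnorm
      field_simp at hnorm
      exact hnorm
    rw [hfx, Real.log_exp]

theorem statement0 (R r : ℝ) (hR : 0 < R) (hr : 0 < r) (hrR : r < R)
    (f : ℂ → ℂ) (hf : AnalyticOnNhd ℂ f (closedBall (0 : ℂ) R))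
    (hnz : ∀ z ∈ closedBall (0 : ℂ) R, f z ≠ 0)
    (h0 : ‖f 0‖ = 1)
    (z : ℂ) (hz : ‖z‖ = r) :
    Real.log ‖f z‖ ≥
      -(2 * r / (R - r)) * Real.log (sSup ((fun w => ‖f w‖) '' sphere (0 : ℂ) R)) := by
  have hcont : ContinuousOn f (closedBall (0 : ℂ) R) :=
    fun x hx => (hf x hx).continuousAt.continuousWithinAt
  have hdiff : DifferentiableOn ℂ f (closedBall (0 : ℂ) R) :=
    fun x hx => (hf x hx).differentiableAt.differentiableWithinAt
  set M : ℝ := sSup ((fun w => ‖f w‖) '' sphere (0 : ℂ) R) with hM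
  have hbdd : BddAbove ((fun w => ‖f w‖) '' sphere (0 : ℂ) R) :=
    ((isCompact_sphere (0 : ℂ) R).image_of_continuousOn
      ((hcont.mono sphere_subset_closedBall).norm)).bddAbove
  have hMb : ∀ w ∈ sphere (0 : ℂ) R, ‖f w‖ ≤ M :=
    fun w hw => le_csSup hbdd ⟨w, hw, rfl⟩
  have hMax : ∀ x ∈ closedBall (0 : ℂ) R, ‖f x‖ ≤ M := by
    intro x hx
    have hU : DiffContOnCl ℂ f (ball (0 : ℂ) R) :=
      ⟨hdiff.mono ball_subset_closedBall, by rw [closure_ball 0 hR.ne']; exact hcont⟩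
    apply Complex.norm_le_of_forall_mem_frontier_norm_le isBounded_ball hU
    · rw [frontier_ball 0 hR.ne']; exact hMb
    · rw [closure_ball 0 hR.ne']; exact hx
  have hM1 : 1 ≤ M := h0 ▸ hMax 0 (mem_closedBall_self hR.le)
  set A : ℝ := Real.log M with hA
  have hA0 : 0 ≤ A := Real.log_nonneg hM1
  have hzR : z ∈ closedBall (0 : ℂ) R := by
    rw [mem_closedBall, dist_zero_right, hz]; exact hrR.le
  have hzB : z ∈ ball (0 : ℂ) R := by
    rw [mem_ball, dist_zero_right, hz]; exact hrR
  rcases eq_or_lt_of_le hA0 with hAz | hApos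
  · -- boundary max is 1: f has constant modulus 1
    have hMone : M = 1 := by
      rcases Real.log_eq_zero.mp hAz.symm with h | h | h <;> linarith
    have hmax : IsMaxOn (norm ∘ f) (ball (0 : ℂ) R) 0 := by
      intro x hx
      simp only [Function.comp_apply, Set.mem_setOf_eq, h0]
      rw [← hMone]
      exact hMax x (ball_subset_closedBall hx)
    have heq := Complex.norm_eqOn_of_isPreconnected_of_isMaxOn
      (convex_ball (0 : ℂ) R).isPreconnected isOpen_ball
      (hdiff.mono ball_subset_closedBall) (mem_ball_self hR) hmax hzB
    simp only [Function.comp_apply, Function.const_apply] at heq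
    rw [← hAz, mul_zero, heq, h0, Real.log_one]
  · obtain ⟨H, Hd, H0, Hre⟩ := exists_log_aux hR hf hnz h0
    have hHA : ∀ w ∈ closedBall (0 : ℂ) R, (H w).re ≤ A := by
      intro w hw
      rw [Hre w hw, hA]
      exact Real.log_le_log (norm_pos_iff.2 (hnz w hw)) (hMax w hw)
    set D : ℂ := ((2 * A : ℝ) : ℂ) with hD
    set φ : ℂ → ℂ := fun w => H w / (D - H w) with hφ
    have hden : ∀ w ∈ closedBall (0 : ℂ) R, D - H w ≠ 0 := by
      intro w hw heq
      have h1 : (D - H w).re = 2 * A - (H w).re := by simp [hD]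
      rw [heq] at h1
      simp only [Complex.zero_re] at h1
      have := hHA w hw
      linarith
    have hφd : DifferentiableOn ℂ φ (ball (0 : ℂ) R) := by
      apply DifferentiableOn.div (Hd.mono ball_subset_closedBall)
        ((differentiableOn_const D).sub (Hd.mono ball_subset_closedBall))
      exact fun w hw => hden w (ball_subset_closedBall hw)
    have hφ0 : φ 0 = 0 := by simp [hφ, H0]
    have hφle : ∀ w ∈ closedBall (0 : ℂ) R, ‖φ w‖ ≤ 1 := by
      intro w hw
      have hnorm : ‖H w‖ ≤ ‖D - H w‖ := by
        apply le_of_pow_le_pow_left₀ two_ne_zero (norm_nonneg _)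
        rw [Complex.sq_norm, Complex.sq_norm]
        simp only [Complex.normSq_apply, Complex.sub_re, Complex.sub_im, hD,
          Complex.ofReal_re, Complex.ofReal_im]
        nlinarith [hHA w hw, hApos]
      rw [hφ, norm_div]
      have hdpos : 0 < ‖D - H w‖ := norm_pos_iff.2 (hden w hw)
      rw [div_le_one hdpos]
      exact hnorm
    have hφz : ‖φ z‖ ≤ r / R := by
      apply le_of_forall_pos_le_add
      intro ε hε
      have hmaps : Set.MapsTo φ (ball (0 : ℂ) R) (closedBall (φ 0) (1 + ε * R / r)) := by
        intro w hw
        rw [hφ0, mem_closedBall, dist_zero_right]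
        have hp1 : 0 < ε * R / r := by positivity
        linarith [hφle w (ball_subset_closedBall hw)]
      have hS := Complex.dist_le_div_mul_dist_of_mapsTo_ball hφd hmaps hzB
      rw [hφ0, dist_zero_right, dist_zero_right, hz] at hS
      calc ‖φ z‖ ≤ (1 + ε * R / r) / R * r := hS
        _ = r / R + ε := by field_simp
    have hdz : D - H z ≠ 0 := hden z hzR
    have hDn : ‖D‖ = 2 * A := by
      rw [hD, Complex.norm_real, Real.norm_eq_abs, abs_of_nonneg (by linarith)]
    have hHz : ‖H z‖ ≤ 2 * A * r / (R - r) := by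
      have h1 : ‖H z‖ ≤ r / R * ‖D - H z‖ := by
        have h1' := hφz
        rw [hφ, norm_div, div_le_iff₀ (norm_pos_iff.2 hdz)] at h1'
        calc ‖H z‖ ≤ r / R * ‖D - H z‖ := by linarith [h1']
          _ = r / R * ‖D - H z‖ := rfl
      have h2 : ‖D - H z‖ ≤ 2 * A + ‖H z‖ := by
        refine (norm_sub_le _ _).trans ?_
        rw [hDn]
      have h4 : ‖H z‖ ≤ r * (2 * A + ‖H z‖) / R := by
        calc ‖H z‖ ≤ r / R * ‖D - H z‖ := h1
          _ ≤ r / R * (2 * A + ‖H z‖) :=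
              mul_le_mul_of_nonneg_left h2 (by positivity)
          _ = r * (2 * A + ‖H z‖) / R := by ring
      have h5 := (le_div_iff₀ hR).mp h4
      rw [le_div_iff₀ (by linarith : (0:ℝ) < R - r)]
      nlinarith [h5]
    have hreb : -(‖H z‖) ≤ (H z).re := by
      have h6 : |(H z).re| ≤ ‖H z‖ := by
        exact Complex.abs_re_le_norm _
      rcases abs_le.mp h6 with ⟨hl, hrr⟩
      linarith
    rw [← Hre z hzR]
    have hring : -(2 * r / (R - r)) * A = -(2 * A * r / (R - r)) := by ring
    rw [ge_iff_le, hring]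
    linarith
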